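/- Let s and e be composable labelled transition systems with s and e mutually accepting, let ℓ ∈ (L_s ∩ L_e) ∪ {δ}, let p1, p2 ∈ Q_s and q1, q2 ∈ Q_e, and suppose there exists σ ∈ Utraces(s ‖ e) with s ‖ e ⟹σ p1 ‖ q1. If p1 ‖ q1 —ℓ→ p2 ‖ q2, then p1 —ℓ→ p2 and q1 —ℓ→ q2. -/

import Mathlib

/-- Visible labels extended with the quiescence label `δ`. -/
inductive DLabel (A : Type) where
  | act : A → DLabel A
  | δ : DLabel A
deriving DecidableEq

/-- A labelled transition system with state type `S` and label type `A`.
`T p none p'` is an internal (τ) transition; `T p (some a) p'` a visible one.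
The set of states is the whole type `S`; the initial state is `q0`. -/
structure LTS (S : Type) (A : Type) where
  T : S → Option A → S → Prop
  I : Set A
  U : Set A
  q0 : S

namespace LTS

variable {S E F A : Type}

/-- The set of visible labels. -/
def L (s : LTS S A) : Set A := s.I ∪ s.U

/-- Well-formedness of an LTS: countably many states and labels, inputs and
outputs disjoint, and visible transitions labelled in `I ∪ U`. -/
def WF (s : LTS S A) : Prop :=
  Countable S ∧ s.I.Countable ∧ s.U.Countable ∧ Disjoint s.I s.U ∧
    ∀ p a q, s.T p (some a) q → a ∈ s.L

/-- A state is quiescent if it has no output transitions and no τ-transitions. -/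
def quiescent (s : LTS S A) (p : S) : Prop :=
  (∀ x ∈ s.U, ∀ p', ¬ s.T p (some x) p') ∧ (∀ p', ¬ s.T p none p')

/-- Single-step transition relation for δ-extended labels: `δ` is a self-loop
on quiescent states. -/
def dstep (s : LTS S A) (p : S) : DLabel A → S → Prop
  | .act a, p' => s.T p (some a) p'
  | .δ, p' => p = p' ∧ s.quiescent p

/-- `eps p p'`: `p'` is reachable from `p` by finitely many τ-transitions. -/
def eps (s : LTS S A) : S → S → Prop :=
  Relation.ReflTransGen (fun p q => s.T p none q)

/-- Weak transition relation `p ⟹σ p'` over δ-extended traces. -/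
def wtrans (s : LTS S A) : S → List (DLabel A) → S → Prop
  | p, [], p' => s.eps p p'
  | p, ℓ :: σ, p'' => ∃ p1 p2, s.eps p p1 ∧ s.dstep p1 ℓ p2 ∧ s.wtrans p2 σ p''

/-- The δ-extended label set `L^δ` as a set of `DLabel`s. -/
def Ld (s : LTS S A) : Set (DLabel A) := (DLabel.act '' s.L) ∪ {DLabel.δ}

/-- `Utraces s`: δ-extended traces of `s` (from the initial state) that never
pass through a state refusing a subsequent input of the trace. -/
def Utraces (s : LTS S A) : Set (List (DLabel A)) :=
  { σ | (∀ ℓ ∈ σ, ℓ ∈ s.Ld) ∧ (∃ p, s.wtrans s.q0 σ p) ∧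
      ∀ σ1 a σ2, σ = σ1 ++ DLabel.act a :: σ2 → a ∈ s.I →
        ∀ p, s.wtrans s.q0 σ1 p → ∃ p', s.wtrans p [DLabel.act a] p' }

/-- `out p`: the outputs (including quiescence δ) enabled in state `p`. -/
def out (s : LTS S A) (p : S) : Set (DLabel A) :=
  { x | match x with
        | .act a => a ∈ s.U ∧ ∃ p', s.T p (some a) p'
        | .δ => s.quiescent p }

/-- `out` of a set of states. -/
def outSet (s : LTS S A) (P : Set S) : Set (DLabel A) := ⋃ p ∈ P, s.out p

/-- `inp p`: the inputs weakly enabled in state `p`. -/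
def inp (s : LTS S A) (p : S) : Set A :=
  { a | a ∈ s.I ∧ ∃ p', s.wtrans p [DLabel.act a] p' }

/-- The states reached from the initial state after trace `σ`. -/
def after (s : LTS S A) (σ : List (DLabel A)) : Set S :=
  { p' | s.wtrans s.q0 σ p' }

/-- Input-enabledness: every input is weakly enabled in every state. -/
def IOTS (s : LTS S A) : Prop :=
  ∀ q : S, ∀ a ∈ s.I, ∃ q', s.wtrans q [DLabel.act a] q'

/-- Two LTSs are composable iff their output sets are disjoint. -/
def Composable (s : LTS S A) (e : LTS E A) : Prop := Disjoint s.U e.U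

/-- Parallel composition of two LTSs: synchronisation on shared labels,
interleaving on non-shared labels and τ. -/
def par (s : LTS S A) (e : LTS E A) : LTS (S × E) A where
  I := (s.I \ e.U) ∪ (e.I \ s.U)
  U := s.U ∪ e.U
  q0 := (s.q0, e.q0)
  T := fun x ℓ y =>
    (s.T x.1 ℓ y.1 ∧ y.2 = x.2 ∧ (ℓ = none ∨ ∃ a ∈ s.L, ℓ = some a) ∧
      ∀ a ∈ e.L, ℓ ≠ some a) ∨
    (e.T x.2 ℓ y.2 ∧ y.1 = x.1 ∧ (ℓ = none ∨ ∃ a ∈ e.L, ℓ = some a) ∧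
      ∀ a ∈ s.L, ℓ ≠ some a) ∨
    (∃ a ∈ s.L ∩ e.L, ℓ = some a ∧ s.T x.1 (some a) y.1 ∧ e.T x.2 (some a) y.2)

/-- The uioco implementation relation. -/
def uioco (i : LTS E A) (s : LTS S A) : Prop :=
  ∀ σ ∈ s.Utraces, i.outSet (i.after σ) ⊆ s.outSet (s.after σ)

/-- `s.Accepts e`: along every Utrace of `s ‖ e`, every output of `e` that is an
input label of `s` is actually accepted by `s` and is an output of `e`. -/
def Accepts (s : LTS S A) (e : LTS E A) : Prop :=
  ∀ σ ∈ (s.par e).Utraces, ∀ p q, (s.par e).wtrans (s.par e).q0 σ (p, q) →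
    ∀ a, DLabel.act a ∈ e.out q → a ∈ s.I → a ∈ s.inp p ∧ a ∈ e.U

/-- Mutual acceptance. -/
def MutuallyAccepts (s : LTS S A) (e : LTS E A) : Prop := s.Accepts e ∧ e.Accepts s

/-- Isomorphism of LTSs: equal label sets and a bijection on states preserving
the initial state and all transitions (including τ and δ). -/
def Isomorphic (s : LTS S A) (s' : LTS E A) : Prop :=
  s.I = s'.I ∧ s.U = s'.U ∧ ∃ f : S ≃ E, f s.q0 = s'.q0 ∧
    (∀ p p' ℓ, s.T p ℓ p' ↔ s'.T (f p) ℓ (f p')) ∧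
    (∀ p p', s.dstep p DLabel.δ p' ↔ s'.dstep (f p) DLabel.δ (f p'))

open Classical in
/-- Projection of a trace onto a set of labels. -/
noncomputable def proj : List (DLabel A) → Set (DLabel A) → List (DLabel A)
  | [], _ => []
  | ℓ :: σ, 𝓛 => if ℓ ∈ 𝓛 then ℓ :: proj σ 𝓛 else proj σ 𝓛

end LTS

section Swap

variable {S E A : Type}

theorem par_T_swap (s : LTS S A) (e : LTS E A) (p p' : S) (q q' : E) (ℓ : Option A) :
    (s.par e).T (p, q) ℓ (p', q') ↔ (e.par s).T (q, p) ℓ (q', p') := by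
  simp only [LTS.par]
  constructor
  · rintro (h | h | ⟨a, ha, h⟩)
    · exact Or.inr (Or.inl h)
    · exact Or.inl h
    · exact Or.inr (Or.inr ⟨a, ⟨ha.2, ha.1⟩, h.1, h.2.2, h.2.1⟩)
  · rintro (h | h | ⟨a, ha, h⟩)
    · exact Or.inr (Or.inl h)
    · exact Or.inl h
    · exact Or.inr (Or.inr ⟨a, ⟨ha.2, ha.1⟩, h.1, h.2.2, h.2.1⟩)

theorem par_eps_swap (s : LTS S A) (e : LTS E A) (p p' : S) (q q' : E) :
    (s.par e).eps (p, q) (p', q') → (e.par s).eps (q, p) (q', p') := by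
  intro h
  have := Relation.ReflTransGen.lift (r := fun (x y : S × E) => (s.par e).T x none y)
    (p := fun (x y : E × S) => (e.par s).T x none y) Prod.swap
    (fun a b hab => (par_T_swap s e a.1 b.1 a.2 b.2 none).mp hab) _ _ h
  exact this

theorem par_quiescent_swap (s : LTS S A) (e : LTS E A) (p : S) (q : E) :
    (s.par e).quiescent (p, q) → (e.par s).quiescent (q, p) := by
  rintro ⟨h1, h2⟩
  constructor
  · intro x hx pq' hT
    exact h1 x (Or.symm hx) (pq'.2, pq'.1) ((par_T_swap s e _ _ _ _ _).mpr hT)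
  · intro pq' hT
    exact h2 (pq'.2, pq'.1) ((par_T_swap s e _ _ _ _ _).mpr hT)

theorem par_dstep_swap (s : LTS S A) (e : LTS E A) (p p' : S) (q q' : E) (ℓ : DLabel A) :
    (s.par e).dstep (p, q) ℓ (p', q') → (e.par s).dstep (q, p) ℓ (q', p') := by
  cases ℓ with
  | act a => exact (par_T_swap s e _ _ _ _ _).mp
  | δ =>
    rintro ⟨heq, hq⟩
    refine ⟨?_, par_quiescent_swap s e p q hq⟩
    cases heq; rfl

theorem par_wtrans_swap (s : LTS S A) (e : LTS E A) :
    ∀ (σ : List (DLabel A)) (p p' : S) (q q' : E),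
    (s.par e).wtrans (p, q) σ (p', q') → (e.par s).wtrans (q, p) σ (q', p')
  | [], p, p', q, q', h => par_eps_swap s e p p' q q' h
  | ℓ :: σ, p, p', q, q', ⟨x1, x2, h1, h2, h3⟩ =>
    ⟨(x1.2, x1.1), (x2.2, x2.1), par_eps_swap s e _ _ _ _ h1,
      par_dstep_swap s e _ _ _ _ _ h2, par_wtrans_swap s e σ _ _ _ _ h3⟩

theorem par_L_swap (s : LTS S A) (e : LTS E A) (a : A) :
    a ∈ (s.par e).L ↔ a ∈ (e.par s).L := by
  simp only [LTS.L, LTS.par, Set.mem_union, Set.mem_diff]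
  tauto

theorem par_I_swap (s : LTS S A) (e : LTS E A) (a : A) :
    a ∈ (s.par e).I ↔ a ∈ (e.par s).I := by
  simp only [LTS.par, Set.mem_union]
  tauto

theorem par_Utraces_swap (s : LTS S A) (e : LTS E A) (σ : List (DLabel A)) :
    σ ∈ (s.par e).Utraces → σ ∈ (e.par s).Utraces := by
  rintro ⟨h1, ⟨pq, h2⟩, h3⟩
  refine ⟨?_, ⟨(pq.2, pq.1), par_wtrans_swap s e σ _ _ _ _ h2⟩, ?_⟩
  · intro ℓ hℓ
    rcases h1 ℓ hℓ with ⟨a, ha, rfl⟩ | h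
    · exact Or.inl ⟨a, (par_L_swap s e a).mp ha, rfl⟩
    · exact Or.inr h
  · intro σ1 a σ2 hσ ha pq' hw
    obtain ⟨x, hx⟩ := h3 σ1 a σ2 hσ ((par_I_swap s e a).mpr ha) (pq'.2, pq'.1)
      (par_wtrans_swap e s σ1 _ _ _ _ hw)
    exact ⟨(x.2, x.1), par_wtrans_swap s e _ _ _ _ _ hx⟩

end Swap

theorem quiescent_of_par_quiescent_left {S E A : Type} (s : LTS S A) (e : LTS E A)
    (hc : LTS.Composable s e) (hma : s.MutuallyAccepts e) (p1 : S) (q1 : E)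
    (hreach : ∃ σ ∈ (s.par e).Utraces, (s.par e).wtrans (s.par e).q0 σ (p1, q1))
    (hq : (s.par e).quiescent (p1, q1)) : s.quiescent p1 := by
  obtain ⟨σ, hσ, hw⟩ := hreach
  constructor
  · intro x hxU p' hT
    by_cases hxe : x ∈ e.L
    · -- x is an input of e; use e.Accepts s
      have hxI : x ∈ e.I := by
        rcases hxe with h | h
        · exact h
        · exact absurd hxU (hc.le_bot ⟨hxU, h⟩ |>.elim)
      have hxI' : x ∈ e.I := hxI
      have hσ' : σ ∈ (e.par s).Utraces := par_Utraces_swap s e σ hσ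
      have hw' : (e.par s).wtrans (e.par s).q0 σ (q1, p1) := by
        have : (e.par s).q0 = ((s.par e).q0.2, (s.par e).q0.1) := rfl
        rw [this]
        exact par_wtrans_swap s e σ _ _ _ _ hw
      have hout : DLabel.act x ∈ s.out p1 := ⟨hxU, p', hT⟩
      obtain ⟨hinp, _⟩ := hma.2 σ hσ' q1 p1 hw' x hout hxI
      obtain ⟨_, q', qa, qb, heps, hst, _⟩ := hinp
      rcases Relation.ReflTransGen.cases_head heps with rfl | ⟨qm, hτ, _⟩
      · -- synchronized step from (p1, q1) labelled x : output of par
        exact hq.1 x (Or.inl hxU) (p', qb)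
          (Or.inr (Or.inr ⟨x, ⟨Or.inr hxU, hxe⟩, rfl, hT, hst⟩))
      · -- τ step of e from q1
        exact hq.2 (p1, qm) (Or.inr (Or.inl ⟨hτ, rfl, Or.inl rfl, fun a _ h => by cases h⟩))
    · -- x not a label of e: s moves alone, output of par
      exact hq.1 x (Or.inl hxU) (p', q1)
        (Or.inl ⟨hT, rfl, Or.inr ⟨x, Or.inr hxU, rfl⟩, fun a ha h => by cases h; exact hxe ha⟩)
  · intro p' hT
    exact hq.2 (p', q1) (Or.inl ⟨hT, rfl, Or.inl rfl, fun a _ h => by cases h⟩)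

/-- for mutually accepting composable `s`, `e` and a state of the
composition reachable by a Utrace, a step on a shared label or on δ is a
synchronised step of both components. -/
theorem par_step_shared_of_mutuallyAccepts {S E A : Type} (s : LTS S A) (e : LTS E A)
    (hs : s.WF) (he : e.WF) (hc : LTS.Composable s e)
    (hma : s.MutuallyAccepts e)
    (ℓ : DLabel A) (hℓ : (∃ a ∈ s.L ∩ e.L, ℓ = DLabel.act a) ∨ ℓ = DLabel.δ)
    (p1 p2 : S) (q1 q2 : E)
    (hreach : ∃ σ ∈ (s.par e).Utraces, (s.par e).wtrans (s.par e).q0 σ (p1, q1))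
    (hstep : (s.par e).dstep (p1, q1) ℓ (p2, q2)) :
    s.dstep p1 ℓ p2 ∧ e.dstep q1 ℓ q2 := by
  rcases hℓ with ⟨a, ⟨has, hae⟩, rfl⟩ | rfl
  · -- shared visible label: must be the synchronized disjunct
    rcases hstep with ⟨_, _, _, h4⟩ | ⟨_, _, _, h4⟩ | ⟨b, _, hb, hTs, hTe⟩
    · exact absurd rfl (h4 a hae)
    · exact absurd rfl (h4 a has)
    · cases hb; exact ⟨hTs, hTe⟩
  · -- δ: quiescence of the composition gives quiescence of both components
    obtain ⟨heq, hq⟩ := hstep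
    obtain ⟨h1, h2⟩ := Prod.mk.injEq .. ▸ heq
    subst h1; subst h2
    refine ⟨⟨rfl, quiescent_of_par_quiescent_left s e hc hma p1 q1 hreach hq⟩,
      ⟨rfl, quiescent_of_par_quiescent_left e s hc.symm ⟨hma.2, hma.1⟩ q1 p1 ?_ (par_quiescent_swap s e p1 q1 hq)⟩⟩
    obtain ⟨σ, hσ, hw⟩ := hreach
    refine ⟨σ, par_Utraces_swap s e σ hσ, ?_⟩
    have : (e.par s).q0 = ((s.par e).q0.2, (s.par e).q0.1) := rfl
    rw [this]
    exact par_wtrans_swap s e σ _ _ _ _ hw
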